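/- Let Σ be a positive semidefinite d×d real matrix with p.s.d. square root W' = Σ^{1/2} and W = (Σ^{1/2})^+ (Moore-Penrose pseudoinverse). Let S ∈ ℝ^{d×k} be any matrix with colsp(S) ⊆ colsp(Σ), and let Q = (WS)(WS)^+ be the orthogonal projection onto colsp(WS). Then the matrix P = I − W^+ Q W is idempotent: P² = P. -/

import Mathlib

open Matrix

/-- The positive semidefinite square root of a positive semidefinite matrix
(as `Matrix.PosSemidef.sqrt` was defined in the older Mathlib). -/
noncomputable def Matrix.PosSemidef.sqrt {n : Type*} [Fintype n] [DecidableEq n]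
    {A : Matrix n n ℝ} (hA : A.PosSemidef) : Matrix n n ℝ :=
  (hA.1.eigenvectorUnitary : Matrix n n ℝ) * diagonal ((↑) ∘ Real.sqrt ∘ hA.1.eigenvalues) *
    (star hA.1.eigenvectorUnitary : Matrix n n ℝ)

/-- **Idempotence of the LEACE eraser.**
Let `Sig` be a positive semidefinite `d × d` real matrix with p.s.d. square root
`hSig.sqrt`, and let `W` be the Moore–Penrose pseudoinverse of `hSig.sqrt`
(characterized by the four Penrose conditions) and `Wp` the Moore–Penrose
pseudoinverse of `W`.  Let `S` be any `d × k` matrix whose column space is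
contained in the column space of `Sig` (i.e. `S = Sig * C` for some `C`), and let
`Q = (W * S) * T` where `T` is the Moore–Penrose pseudoinverse of `W * S`, so
that `Q` is the orthogonal projection onto `colsp (W * S)`.  Then the LEACE
matrix `P = I - Wp * Q * W` is idempotent: `P ^ 2 = P`. -/
theorem leace_idempotent {d k : ℕ}
    (Sig : Matrix (Fin d) (Fin d) ℝ) (hSig : Sig.PosSemidef)
    (W Wp : Matrix (Fin d) (Fin d) ℝ)
    -- W is the Moore–Penrose pseudoinverse of the p.s.d. square root of Sig
    (hW1 : hSig.sqrt * W * hSig.sqrt = hSig.sqrt)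
    (hW2 : W * hSig.sqrt * W = W)
    (hW3 : (hSig.sqrt * W)ᵀ = hSig.sqrt * W)
    (hW4 : (W * hSig.sqrt)ᵀ = W * hSig.sqrt)
    -- Wp is the Moore–Penrose pseudoinverse of W
    (hWp1 : W * Wp * W = W)
    (hWp2 : Wp * W * Wp = Wp)
    (hWp3 : (W * Wp)ᵀ = W * Wp)
    (hWp4 : (Wp * W)ᵀ = Wp * W)
    (S : Matrix (Fin d) (Fin k) ℝ)
    -- colsp(S) ⊆ colsp(Sig)
    (hS : ∃ C : Matrix (Fin d) (Fin k) ℝ, S = Sig * C)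
    (T : Matrix (Fin k) (Fin d) ℝ)
    -- T is the Moore–Penrose pseudoinverse of W * S
    (hT1 : (W * S) * T * (W * S) = W * S)
    (hT2 : T * (W * S) * T = T)
    (hT3 : ((W * S) * T)ᵀ = (W * S) * T)
    (hT4 : (T * (W * S))ᵀ = T * (W * S))
    (Q : Matrix (Fin d) (Fin d) ℝ) (hQ : Q = (W * S) * T)
    (P : Matrix (Fin d) (Fin d) ℝ) (hP : P = 1 - Wp * Q * W) :
    P * P = P := by
  subst hQ hP
  have h1 : W * Wp * (W * S) = W * S := by
    calc W * Wp * (W * S) = (W * Wp * W) * S := by simp only [Matrix.mul_assoc]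
    _ = W * S := by rw [hWp1]
  have key : (W * S * T) * (W * Wp * (W * S * T)) = W * S * T := by
    calc (W * S * T) * (W * Wp * (W * S * T))
        = (W * S * T) * ((W * Wp * (W * S)) * T) := by rw [Matrix.mul_assoc (W*Wp)]
    _ = (W * S * T) * ((W * S) * T) := by rw [h1]
    _ = ((W * S) * T * (W * S)) * T := by simp only [Matrix.mul_assoc]
    _ = W * S * T := by rw [hT1]
  have hA : (Wp * (W * S * T) * W) * (Wp * (W * S * T) * W) = Wp * (W * S * T) * W := by
    calc (Wp * (W * S * T) * W) * (Wp * (W * S * T) * W)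
        = Wp * ((W * S * T) * (W * Wp * (W * S * T))) * W := by noncomm_ring
    _ = Wp * (W * S * T) * W := by rw [key]
  calc (1 - Wp * (W * S * T) * W) * (1 - Wp * (W * S * T) * W)
      = 1 - Wp * (W * S * T) * W - Wp * (W * S * T) * W
        + (Wp * (W * S * T) * W) * (Wp * (W * S * T) * W) := by noncomm_ring
  _ = 1 - Wp * (W * S * T) * W := by rw [hA]; noncomm_ring
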